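/- arXiv:1401.4560 — 2 statements merged into one kernel-verified Lean document; each statement's English description precedes it below -/
import Mathlib

section
/- (Difference equation for q-Euler polynomials.) For every integer n ≥ 0 and all x ∈ ℂ: E_{n,q}(x,1) + E_{n,q}(x) = 2 ((−1;q)_n/2^n) x^n. -/
open Finset PowerSeries

/-- The `q`-number `[n]_q = (1 - q^n)/(1 - q)`. -/
noncomputable def qNum (q : ℂ) (n : ℕ) : ℂ := (1 - q ^ n) / (1 - q)

/-- The `q`-factorial `[n]_q!`. -/
noncomputable def qFact (q : ℂ) : ℕ → ℂ
  | 0 => 1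
  | n + 1 => qNum q (n + 1) * qFact q n

/-- The `q`-shifted factorial `(a; q)_n = ∏_{j=0}^{n-1} (1 - q^j a)`. -/
noncomputable def qShift (a q : ℂ) (n : ℕ) : ℂ := ∏ j ∈ Finset.range n, (1 - q ^ j * a)

/-- The Gaussian binomial coefficient `[n choose k]_q = (q;q)_n / ((q;q)_{n-k} (q;q)_k)`. -/
noncomputable def qBinom (q : ℂ) (n k : ℕ) : ℂ :=
  qShift q q n / (qShift q q (n - k) * qShift q q k)

/-- The formal power series (in `t`) `𝓔_q(tx) = Σ_{n≥0} (-1;q)_n (x)^n t^n / (2^n [n]_q!)`. -/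
noncomputable def qExp (q x : ℂ) : PowerSeries ℂ :=
  PowerSeries.mk fun n => qShift (-1) q n * x ^ n / (2 ^ n * qFact q n)

/-- The generating series `Σ_{n≥0} a_n t^n / [n]_q!` of a sequence `a`. -/
noncomputable def qGen (q : ℂ) (a : ℕ → ℂ) : PowerSeries ℂ :=
  PowerSeries.mk fun n => a n / qFact q n

/-- The `q`-addition `(x ⊕_q y)^n`. -/
noncomputable def qAdd (q x y : ℂ) (n : ℕ) : ℂ :=
  ∑ k ∈ Finset.range (n + 1),
    qBinom q n k * (qShift (-1) q k * qShift (-1) q (n - k) / 2 ^ n) * x ^ k * y ^ (n - k)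

lemma qFact_ne_zero (q : ℂ) (hq1 : ‖q‖ < 1) : ∀ n, qFact q n ≠ 0 := by
  intro n
  induction n with
  | zero => simp [qFact]
  | succ k ih =>
    have hqn : q ^ (k + 1) ≠ 1 := by
      intro h
      have : ‖q ^ (k + 1)‖ < 1 := by
        rw [norm_pow]
        exact pow_lt_one₀ (norm_nonneg q) hq1 (Nat.succ_ne_zero k)
      rw [h] at this; simp at this
    have hq : q ≠ 1 := by
      intro h; rw [h] at hq1; simp at hq1
    have : qNum q (k + 1) ≠ 0 := by
      unfold qNum
      exact div_ne_zero (sub_ne_zero.2 (Ne.symm hqn)) (sub_ne_zero.2 (Ne.symm hq))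
    exact mul_ne_zero this ih

lemma qExp_zero (q : ℂ) : qExp q 0 = 1 := by
  ext m
  simp only [qExp, coeff_mk, coeff_one]
  cases m with
  | zero => simp [qShift, qFact]
  | succ k => simp

/-- Difference equation for the `q`-Euler polynomials:
`E_{n,q}(x,1) + E_{n,q}(x) = 2((-1;q)_n/2^n) x^n` for `n ≥ 0`. -/
theorem qEuler_difference (q : ℂ) (hq0 : 0 < ‖q‖) (hq1 : ‖q‖ < 1)
    (E : ℂ → ℂ → ℕ → ℂ)
    (hE : ∀ x y : ℂ, qGen q (E x y) * (qExp q 1 + 1) = 2 * qExp q x * qExp q y)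
    (n : ℕ) (x : ℂ) :
    E x 1 n + E x 0 n = 2 * (qShift (-1) q n / 2 ^ n) * x ^ n := by
  have hF := qFact_ne_zero q hq1
  have h1 := hE x 1
  have h0 := hE x 0
  rw [qExp_zero, mul_one] at h0
  have hne : qExp q 1 + 1 ≠ 0 := by
    intro h
    have h2 := congrArg (PowerSeries.coeff 0) h
    have e1 : qFact q 0 = 1 := rfl
    simp [qExp, qShift, e1] at h2
  have hkey : qGen q (E x 1) + qGen q (E x 0) = 2 * qExp q x :=
    mul_right_cancel₀ hne (by rw [add_mul, h1, h0]; ring)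
  have h2 : (PowerSeries.coeff n) (2 * qExp q x)
      = 2 * (qShift (-1) q n * x ^ n / (2 ^ n * qFact q n)) := by
    have e : (2 : PowerSeries ℂ) = PowerSeries.C 2 := (map_ofNat (PowerSeries.C (R := ℂ)) 2).symm
    rw [e, PowerSeries.coeff_C_mul, qExp, coeff_mk]
  have hc := congrArg (PowerSeries.coeff n) hkey
  rw [h2] at hc
  simp only [map_add, qGen, coeff_mk] at hc
  have h2n : (2 : ℂ) ^ n ≠ 0 := pow_ne_zero n two_ne_zero
  field_simp [hF n] at hc
  have hc2 : (E x 1 n + E x 0 n) * 2 ^ n = 2 * (qShift (-1) q n * x ^ n) :=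
    mul_right_cancel₀ (hF n) (by linear_combination qFact q n * hc)
  field_simp
  linear_combination hc2
end

section
/- (Expansion of x^n in q-Genocchi polynomials.) For every integer n ≥ 0 and all x ∈ ℂ: x^n = (2^{n−1}/((−1;q)_n [n+1]_q)) · ( Σ_{k=0}^{n+1} [n+1 choose k]_q ((−1;q)_{n+1−k}/2^{n+1−k}) G_{k,q}(x) + G_{n+1,q}(x) ). -/
open Finset PowerSeries


variable {q : ℂ} (hq1 : ‖q‖ < 1)

lemma one_sub_pow_ne (hq1 : ‖q‖ < 1) {m : ℕ} (hm : m ≠ 0) : (1 : ℂ) - q ^ m ≠ 0 := by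
  intro h
  have : q ^ m = 1 := by linear_combination -h
  have := congrArg norm this
  rw [norm_pow, norm_one] at this
  have h2 : ‖q‖ ^ m < 1 := pow_lt_one₀ (norm_nonneg q) hq1 hm
  rw [this] at h2; exact lt_irrefl _ h2

lemma one_add_pow_ne (hq1 : ‖q‖ < 1) (m : ℕ) : (1 : ℂ) + q ^ m ≠ 0 := by
  rcases Nat.eq_zero_or_pos m with h | hpos
  · subst h; norm_num
  intro h
  have : q ^ m = -1 := by linear_combination h
  have := congrArg norm this
  rw [norm_pow] at this; simp at this
  have h2 : ‖q‖ ^ m < 1 := pow_lt_one₀ (norm_nonneg q) hq1 hpos.ne'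
  rw [this] at h2; exact lt_irrefl _ h2

lemma one_sub_q_ne (hq1 : ‖q‖ < 1) : (1 : ℂ) - q ≠ 0 := by
  have := one_sub_pow_ne hq1 (m := 1) one_ne_zero; simpa using this

lemma qNum_ne (hq1 : ‖q‖ < 1) {m : ℕ} (hm : m ≠ 0) : qNum q m ≠ 0 :=
  div_ne_zero (one_sub_pow_ne hq1 hm) (one_sub_q_ne hq1)

lemma qFact_ne (hq1 : ‖q‖ < 1) (m : ℕ) : qFact q m ≠ 0 := by
  induction m with
  | zero => simp [qFact]
  | succ k ih => exact mul_ne_zero (qNum_ne hq1 k.succ_ne_zero) ih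

lemma qShift_neg_one_ne (hq1 : ‖q‖ < 1) (m : ℕ) : qShift (-1) q m ≠ 0 := by
  rw [qShift, Finset.prod_ne_zero_iff]
  intro j _
  simpa using one_add_pow_ne hq1 j

lemma qShift_q_eq (hq1 : ‖q‖ < 1) (m : ℕ) :
    qShift q q m = (1 - q) ^ m * qFact q m := by
  induction m with
  | zero => simp [qShift, qFact]
  | succ k ih =>
      rw [qShift, Finset.prod_range_succ, ← qShift, ih]
      have : (1 : ℂ) - q ^ k * q = (1 - q) * qNum q (k+1) := by
        rw [qNum]; field_simp [one_sub_q_ne hq1]; ring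
      rw [this, qFact]; ring

lemma qShift_q_ne (hq1 : ‖q‖ < 1) (m : ℕ) : qShift q q m ≠ 0 := by
  rw [qShift_q_eq hq1]
  exact mul_ne_zero (pow_ne_zero _ (one_sub_q_ne hq1)) (qFact_ne hq1 m)

lemma qBinom_eq (hq1 : ‖q‖ < 1) {n k : ℕ} (hk : k ≤ n) :
    qBinom q n k = qFact q n / (qFact q (n - k) * qFact q k) := by
  rw [qBinom, qShift_q_eq hq1, qShift_q_eq hq1, qShift_q_eq hq1]
  have hpow : (1 - q) ^ n = (1 - q) ^ (n - k) * (1 - q) ^ k := by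
    rw [← pow_add, Nat.sub_add_cancel hk]
  rw [hpow]
  have h1 := one_sub_q_ne hq1
  have hf1 := qFact_ne hq1 (n - k)
  have hf2 := qFact_ne hq1 k
  have hp1 : ((1:ℂ) - q) ^ (n - k) ≠ 0 := pow_ne_zero _ h1
  have hp2 : ((1:ℂ) - q) ^ k ≠ 0 := pow_ne_zero _ h1
  field_simp

/-- Expansion of `x^n` in `q`-Genocchi polynomials:
`x^n = (2^{n-1}/((-1;q)_n [n+1]_q))(Σ_{k=0}^{n+1} [n+1 choose k]_q ((-1;q)_{n+1-k}/2^{n+1-k}) G_{k,q}(x) + G_{n+1,q}(x))`. -/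
theorem pow_eq_sum_qGenocchi (q : ℂ) (hq0 : 0 < ‖q‖) (hq1 : ‖q‖ < 1)
    (G : ℂ → ℂ → ℕ → ℂ)
    (hG : ∀ x y : ℂ, qGen q (G x y) * (qExp q 1 + 1) = 2 * PowerSeries.X * qExp q x * qExp q y)
    (n : ℕ) (x : ℂ) :
    x ^ n = (2 : ℂ) ^ ((n : ℤ) - 1) / (qShift (-1) q n * qNum q (n + 1)) *
      ((∑ k ∈ Finset.range (n + 2),
          qBinom q (n + 1) k * (qShift (-1) q (n + 1 - k) / 2 ^ (n + 1 - k)) * G x 0 k)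
        + G x 0 (n + 1)) := by
  have hA := qShift_neg_one_ne hq1
  have hF := qFact_ne hq1
  have hN : qNum q (n + 1) ≠ 0 := qNum_ne hq1 (Nat.succ_ne_zero n)
  have h0 : qExp q 0 = (1 : PowerSeries ℂ) := by
    ext m
    rw [qExp, coeff_mk, PowerSeries.coeff_one]
    cases m with
    | zero => simp [qShift, qFact]
    | succ m => simp
  have h1 := hG x 0
  rw [h0, mul_one] at h1
  have h2 := congrArg (coeff (R := ℂ) (n + 1)) h1
  rw [PowerSeries.coeff_mul, Finset.Nat.sum_antidiagonal_eq_sum_range_succ_mk,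
    mul_assoc, ← map_ofNat (C (R := ℂ)) 2, coeff_C_mul, coeff_succ_X_mul] at h2
  simp only [qGen, qExp, map_add, coeff_mk, PowerSeries.coeff_one, one_pow, mul_one,
    Nat.succ_eq_add_one] at h2
  have hterm : ∀ k ∈ Finset.range (n + 1 + 1),
      qFact q (n + 1) * (G x 0 k / qFact q k *
        (qShift (-1) q (n + 1 - k) / (2 ^ (n + 1 - k) * qFact q (n + 1 - k)) +
          if n + 1 - k = 0 then 1 else 0))
      = qBinom q (n + 1) k * (qShift (-1) q (n + 1 - k) / 2 ^ (n + 1 - k)) * G x 0 k +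
        (if k = n + 1 then G x 0 (n + 1) else 0) := by
    intro k hk
    rw [Finset.mem_range] at hk
    rcases eq_or_lt_of_le (Nat.lt_succ_iff.mp hk) with he | hlt
    · subst he
      have hb : qBinom q (n + 1) (n + 1) = 1 := by
        rw [qBinom, Nat.sub_self]
        simp only [qShift, Finset.range_zero, Finset.prod_empty, one_mul]
        exact div_self (qShift_q_ne hq1 (n + 1))
      simp only [Nat.sub_self, if_pos rfl, hb]
      simp only [show qShift (-1) q 0 = 1 by simp [qShift],
        show qFact q 0 = 1 from rfl, pow_zero]
      field_simp [hF (n + 1)]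
      simp
      ring
    · have hm : n + 1 - k ≠ 0 := Nat.sub_ne_zero_of_lt hlt
      rw [if_neg hm, if_neg (by omega : ¬ k = n + 1), qBinom_eq hq1 (le_of_lt hlt)]
      have h2m : (2 : ℂ) ^ (n + 1 - k) ≠ 0 := pow_ne_zero _ two_ne_zero
      field_simp [hF k, hF (n + 1 - k), hF (n + 1)]
      ring
  have h3 : qFact q (n + 1) * (2 * (qShift (-1) q n * x ^ n / (2 ^ n * qFact q n))) =
      (∑ k ∈ Finset.range (n + 2),
          qBinom q (n + 1) k * (qShift (-1) q (n + 1 - k) / 2 ^ (n + 1 - k)) * G x 0 k)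
        + G x 0 (n + 1) := by
    rw [← h2, Finset.mul_sum, Finset.sum_congr rfl hterm, Finset.sum_add_distrib]
    congr 1
    simp
  have h2pow : (2 : ℂ) ^ ((n : ℤ) - 1) = 2 ^ n / 2 := by
    rw [zpow_sub₀ (two_ne_zero), zpow_one, zpow_natCast]
  rw [h2pow, ← h3, show qFact q (n + 1) = qNum q (n + 1) * qFact q n from rfl]
  field_simp [hA n, hN, hF n]
end
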